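/- arXiv:2306.11127 — 3 statements merged into one kernel-verified Lean document; each statement's English description precedes it below -/
import Mathlib

section
/- Let S ⊆ ℝ^d be a finite full-dimensional set containing the origin whose nonzero points all lie on the sphere of radius 2r and are pairwise at distance at least 2r. If τ_d denotes the kissing number (maximum number of points on a sphere of radius 2r that are pairwise at distance ≥ 2r), then the group of linear isometries preserving S has order at most τ_d^d. -/
/-- Let `S = {0} ∪ S₀ ⊆ ℝ^d` be finite and full-dimensional, with the points of `S₀`
lying on the sphere of radius `2r` about the origin and pairwise at distance at least
`2r`. If `τ` is the kissing number in dimension `d` (an upper bound on the cardinality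
of any set of points on a sphere of radius `2r` with pairwise distances at least `2r`),
then the group of linear isometries preserving `S` has order at most `τ^d`. -/
theorem card_symmetry_group_le_kissing_pow
    (d : ℕ) (r : ℝ) (hr : 0 < r) (S₀ : Finset (EuclideanSpace ℝ (Fin d)))
    (hsph : (↑S₀ : Set (EuclideanSpace ℝ (Fin d))) ⊆ Metric.sphere 0 (2 * r))
    (hsep : ∀ u ∈ S₀, ∀ v ∈ S₀, u ≠ v → 2 * r ≤ dist u v)
    (hspan : Submodule.span ℝ (↑S₀ : Set (EuclideanSpace ℝ (Fin d))) = ⊤)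
    (τ : ℕ)
    (hτ : ∀ (c : EuclideanSpace ℝ (Fin d)) (T : Finset (EuclideanSpace ℝ (Fin d))),
      (↑T : Set (EuclideanSpace ℝ (Fin d))) ⊆ Metric.sphere c (2 * r) →
      (∀ u ∈ T, ∀ v ∈ T, u ≠ v → 2 * r ≤ dist u v) → T.card ≤ τ) :
    {g : EuclideanSpace ℝ (Fin d) ≃ₗᵢ[ℝ] EuclideanSpace ℝ (Fin d) |
        g '' ({0} ∪ (↑S₀ : Set (EuclideanSpace ℝ (Fin d)))) =
          {0} ∪ (↑S₀ : Set (EuclideanSpace ℝ (Fin d)))}.Finite ∧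
      {g : EuclideanSpace ℝ (Fin d) ≃ₗᵢ[ℝ] EuclideanSpace ℝ (Fin d) |
        g '' ({0} ∪ (↑S₀ : Set (EuclideanSpace ℝ (Fin d)))) =
          {0} ∪ (↑S₀ : Set (EuclideanSpace ℝ (Fin d)))}.ncard ≤ τ ^ d := by
  classical
  set G : Set (EuclideanSpace ℝ (Fin d) ≃ₗᵢ[ℝ] EuclideanSpace ℝ (Fin d)) :=
    {g | g '' ({0} ∪ (↑S₀ : Set (EuclideanSpace ℝ (Fin d)))) =
      {0} ∪ (↑S₀ : Set (EuclideanSpace ℝ (Fin d)))} with hG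
  -- every symmetry maps S₀ into S₀
  have hmaps : ∀ g ∈ G, ∀ u ∈ S₀, g u ∈ S₀ := by
    intro g hg u hu
    have hmem : g u ∈ ({0} ∪ (↑S₀ : Set (EuclideanSpace ℝ (Fin d)))) := by
      rw [← hg]
      exact Set.mem_image_of_mem g (Or.inr hu)
    rcases hmem with h0 | h
    · exfalso
      have hu0 : u ≠ 0 := by
        intro h
        have := hsph hu
        rw [h, Metric.mem_sphere, dist_self] at this
        linarith
      have hgu : g u = 0 := h0
      exact hu0 (by simpa using g.map_eq_zero_iff.mp hgu)
    · exact h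
  -- extract a basis from S₀
  obtain ⟨t, hts, htspan, hli⟩ :=
    exists_linearIndependent ℝ (↑S₀ : Set (EuclideanSpace ℝ (Fin d)))
  have ht : t.Finite := S₀.finite_toSet.subset hts
  haveI : Fintype t := ht.fintype
  have hspan' : ⊤ ≤ Submodule.span ℝ (Set.range ((↑) : t → EuclideanSpace ℝ (Fin d))) := by
    rw [Subtype.range_coe, htspan, hspan]
  let b : Module.Basis t ℝ (EuclideanSpace ℝ (Fin d)) := Module.Basis.mk hli hspan'
  have hcard : Fintype.card t = d := by
    have h1 := Module.finrank_eq_card_basis b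
    rw [finrank_euclideanSpace_fin] at h1
    omega
  -- injective map from G to (t → S₀)
  let F : G → (t → {x // x ∈ S₀}) := fun g i =>
    ⟨g.1 i.1, hmaps g.1 g.2 i.1 (hts i.2)⟩
  have hFinj : Function.Injective F := by
    intro g₁ g₂ hF
    have hb : ∀ i : t,
        (g₁.1 : EuclideanSpace ℝ (Fin d) →ₗ[ℝ] EuclideanSpace ℝ (Fin d)) (b i) =
        (g₂.1 : EuclideanSpace ℝ (Fin d) →ₗ[ℝ] EuclideanSpace ℝ (Fin d)) (b i) := by
      intro i
      have := congrFun hF i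
      simpa [F, b, Module.Basis.mk_apply] using congrArg Subtype.val this
    have hlin : (g₁.1 : EuclideanSpace ℝ (Fin d) →ₗ[ℝ] EuclideanSpace ℝ (Fin d)) =
        (g₂.1 : EuclideanSpace ℝ (Fin d) →ₗ[ℝ] EuclideanSpace ℝ (Fin d)) := b.ext hb
    apply Subtype.ext
    exact LinearIsometryEquiv.ext fun x => LinearMap.congr_fun hlin x
  haveI hGfin : Finite G := Finite.of_injective F hFinj
  refine ⟨Set.finite_coe_iff.mp hGfin, ?_⟩
  have h1 : G.ncard ≤ Nat.card (t → {x // x ∈ S₀}) := by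
    rw [← Nat.card_coe_set_eq]
    exact Nat.card_le_card_of_injective F hFinj
  have h2 : Nat.card (t → {x // x ∈ S₀}) = S₀.card ^ d := by
    rw [Nat.card_fun]
    simp [Nat.card_eq_fintype_card, hcard, Fintype.card_coe]
  have h3 : S₀.card ≤ τ := hτ 0 S₀ hsph hsep
  calc G.ncard ≤ S₀.card ^ d := by rw [← h2]; exact h1
    _ ≤ τ ^ d := Nat.pow_le_pow_left h3 d
end

section
/- Let X = ℤ^d ∪ ((1/2, …, 1/2) + ℤ^d) in ℝ^d with d ≥ 5. Then the minimal distance between distinct points of X is 1, and for any x ∈ X the set of points of X 1-reachable from x (chains with steps of length ≤ 1) equals the translate of ℤ^d containing x; in particular X is not 1-bonded. -/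
/-- `y` is `t`-reachable from `x` within `X`. -/
def Reachable (d : ℕ) (X : Set (EuclideanSpace ℝ (Fin d))) (t : ℝ)
    (x y : EuclideanSpace ℝ (Fin d)) : Prop :=
  ∃ (m : ℕ) (c : ℕ → EuclideanSpace ℝ (Fin d)),
    c 0 = x ∧ c m = y ∧ (∀ i ≤ m, c i ∈ X) ∧ ∀ i < m, dist (c (i + 1)) (c i) ≤ t

/-- The integer lattice `ℤ^d` inside `ℝ^d`. -/
def IntLattice (d : ℕ) : Set (EuclideanSpace ℝ (Fin d)) :=
  {v | ∀ i, ∃ n : ℤ, v i = n}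

/-- The vector `(1/2, …, 1/2) ∈ ℝ^d`. -/
noncomputable def halfVec (d : ℕ) : EuclideanSpace ℝ (Fin d) := WithLp.toLp 2 (fun _ => 1 / 2)

/-- The set `X = ℤ^d ∪ ((1/2, …, 1/2) + ℤ^d)` in `ℝ^d`. -/
def halfIntSet (d : ℕ) : Set (EuclideanSpace ℝ (Fin d)) :=
  IntLattice d ∪ {v | ∃ w ∈ IntLattice d, v = halfVec d + w}

/- ### Auxiliary lemmas -/

lemma dist_sq_eq (d : ℕ) (x y : EuclideanSpace ℝ (Fin d)) :
    dist x y ^ 2 = ∑ i, (x i - y i) ^ 2 := by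
  rw [EuclideanSpace.dist_eq, Real.sq_sqrt (by positivity)]
  simp [Real.dist_eq, sq_abs]

lemma intLattice_zero (d : ℕ) : (0 : EuclideanSpace ℝ (Fin d)) ∈ IntLattice d :=
  fun i => ⟨0, by simp⟩

lemma intLattice_add {d : ℕ} {v w : EuclideanSpace ℝ (Fin d)}
    (hv : v ∈ IntLattice d) (hw : w ∈ IntLattice d) : v + w ∈ IntLattice d := by
  intro i
  obtain ⟨n, hn⟩ := hv i
  obtain ⟨m, hm⟩ := hw i
  exact ⟨n + m, by simp [hn, hm]⟩

lemma intLattice_sub {d : ℕ} {v w : EuclideanSpace ℝ (Fin d)}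
    (hv : v ∈ IntLattice d) (hw : w ∈ IntLattice d) : v - w ∈ IntLattice d := by
  intro i
  obtain ⟨n, hn⟩ := hv i
  obtain ⟨m, hm⟩ := hw i
  exact ⟨n - m, by simp [hn, hm]⟩

lemma intLattice_neg {d : ℕ} {v : EuclideanSpace ℝ (Fin d)}
    (hv : v ∈ IntLattice d) : -v ∈ IntLattice d := by
  intro i
  obtain ⟨n, hn⟩ := hv i
  exact ⟨-n, by simp [hn]⟩

/-- The coercion of an integer vector. -/
def zvec (d : ℕ) (w : Fin d → ℤ) : EuclideanSpace ℝ (Fin d) := WithLp.toLp 2 (fun i => (w i : ℝ))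

lemma zvec_mem (d : ℕ) (w : Fin d → ℤ) : zvec d w ∈ IntLattice d :=
  fun i => ⟨w i, rfl⟩

lemma halfIntSet_add_int {d : ℕ} {x w : EuclideanSpace ℝ (Fin d)}
    (hx : x ∈ halfIntSet d) (hw : w ∈ IntLattice d) : x + w ∈ halfIntSet d := by
  rcases hx with hx | ⟨w', hw', rfl⟩
  · exact Or.inl (intLattice_add hx hw)
  · exact Or.inr ⟨w' + w, intLattice_add hw' hw, by rw [add_assoc]⟩

/-- Distance between distinct lattice points of the same coset is at least 1. -/
lemma one_le_dist_lattice {d : ℕ} {x y : EuclideanSpace ℝ (Fin d)}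
    (h : x - y ∈ IntLattice d) (hxy : x ≠ y) : 1 ≤ dist x y := by
  have hne : ∃ i, x i ≠ y i := by
    by_contra hc
    push_neg at hc
    exact hxy (PiLp.ext hc)
  obtain ⟨i, hi⟩ := hne
  obtain ⟨n, hn⟩ := h i
  have hn' : x i - y i = (n : ℝ) := by simpa using hn
  have hn0 : n ≠ 0 := by
    rintro rfl
    simp at hn'
    exact hi (sub_eq_zero.mp hn')
  have h1 : (1 : ℝ) ≤ (x i - y i) ^ 2 := by
    rw [hn']
    have h : (1 : ℤ) ≤ n ^ 2 := by nlinarith [sq_nonneg n, Int.one_le_abs hn0, sq_abs n]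
    have h' := (Int.cast_le (R := ℝ)).mpr h
    push_cast at h'
    exact h'
  have h2 : (1 : ℝ) ≤ dist x y ^ 2 := by
    rw [dist_sq_eq]
    calc (1 : ℝ) ≤ (x i - y i) ^ 2 := h1
      _ ≤ ∑ j, (x j - y j) ^ 2 :=
        Finset.single_le_sum (f := fun j => (x j - y j) ^ 2)
          (fun j _ => sq_nonneg _) (Finset.mem_univ i)
  nlinarith [dist_nonneg (x := x) (y := y)]

/-- Distance between the two cosets is more than 1 (needs `d ≥ 5`). -/
lemma one_lt_dist_cross {d : ℕ} (hd : 5 ≤ d) {x y : EuclideanSpace ℝ (Fin d)}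
    (hx : x ∈ IntLattice d) (hy : ∃ w ∈ IntLattice d, y = halfVec d + w) :
    1 < dist x y := by
  obtain ⟨w, hw, rfl⟩ := hy
  have key : ∀ i, (1 : ℝ) / 4 ≤ (x i - (halfVec d + w) i) ^ 2 := by
    intro i
    obtain ⟨n, hn⟩ := hx i
    obtain ⟨m, hm⟩ := hw i
    have : (halfVec d + w) i = 1 / 2 + m := by
      simp [halfVec, hm]
    rw [this, hn]
    have hcases : (n : ℝ) - m ≤ 0 ∨ 1 ≤ (n : ℝ) - m := by
      rcases le_or_gt (n - m) 0 with h | h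
      · left
        have h' := (Int.cast_le (R := ℝ)).mpr h
        push_cast at h'
        linarith
      · right
        have h1 : (1 : ℤ) ≤ n - m := h
        have h' := (Int.cast_le (R := ℝ)).mpr h1
        push_cast at h'
        linarith
    rcases hcases with h | h <;> nlinarith
  have h2 : (5 : ℝ) / 4 ≤ dist x (halfVec d + w) ^ 2 := by
    rw [dist_sq_eq]
    calc (5 : ℝ) / 4 ≤ (d : ℝ) / 4 := by
          have : (5 : ℝ) ≤ d := by exact_mod_cast hd
          linarith
      _ = ∑ _i : Fin d, (1 : ℝ) / 4 := by
          simp [Finset.sum_const, Finset.card_univ]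
          ring
      _ ≤ ∑ i, (x i - (halfVec d + w) i) ^ 2 :=
          Finset.sum_le_sum (fun i _ => key i)
  nlinarith [dist_nonneg (x := x) (y := halfVec d + w)]

/-- Any step of length ≤ 1 within `halfIntSet` stays in the same coset. -/
lemma step_same_coset {d : ℕ} (hd : 5 ≤ d) {a b : EuclideanSpace ℝ (Fin d)}
    (ha : a ∈ halfIntSet d) (hb : b ∈ halfIntSet d) (hab : dist a b ≤ 1) :
    b - a ∈ IntLattice d := by
  rcases ha with ha | ⟨wa, hwa, rfl⟩ <;> rcases hb with hb | ⟨wb, hwb, rfl⟩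
  · exact intLattice_sub hb ha
  · exact absurd hab (by simpa using not_le.mpr (one_lt_dist_cross hd ha ⟨wb, hwb, rfl⟩))
  · exact absurd hab (by
      rw [dist_comm]
      exact not_le.mpr (one_lt_dist_cross hd hb ⟨wa, hwa, rfl⟩))
  · have : halfVec d + wb - (halfVec d + wa) = wb - wa := by abel
    rw [this]
    exact intLattice_sub hwb hwa

lemma Reachable.extend {d : ℕ} {X : Set (EuclideanSpace ℝ (Fin d))} {t : ℝ}
    {x y z : EuclideanSpace ℝ (Fin d)} (h : Reachable d X t x y) (hz : z ∈ X)
    (hdz : dist z y ≤ t) : Reachable d X t x z := by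
  obtain ⟨m, c, h0, hm, hmem, hstep⟩ := h
  refine ⟨m + 1, fun n => if n ≤ m then c n else z, by simp [h0], by simp, ?_, ?_⟩
  · intro i hi
    by_cases h : i ≤ m
    · simpa [h] using hmem i h
    · simpa [h] using hz
  · intro i hi
    rcases Nat.lt_or_ge i m with h | h
    · have h1 : i + 1 ≤ m := h
      have h2 : i ≤ m := Nat.le_of_lt h
      simpa [h1, h2] using hstep i h
    · have : i = m := Nat.le_antisymm (Nat.lt_succ_iff.mp hi) h
      subst this
      simp [hm, hdz]

lemma reachable_zvec {d : ℕ} (x : EuclideanSpace ℝ (Fin d)) (hx : x ∈ halfIntSet d)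
    (w : Fin d → ℤ) : Reachable d (halfIntSet d) 1 x (x + zvec d w) := by
  have key : ∀ n : ℕ, ∀ w : Fin d → ℤ, (∑ i, (w i).natAbs) = n →
      Reachable d (halfIntSet d) 1 x (x + zvec d w) := by
    intro n
    induction n using Nat.strong_induction_on with
    | _ n ih =>
      intro w hw
      by_cases h0 : ∀ i, w i = 0
      · have : zvec d w = 0 := PiLp.ext fun i => by simp [zvec, h0 i]
        rw [this, add_zero]
        exact ⟨0, fun _ => x, rfl, rfl, fun i _ => hx, fun i hi => absurd hi (Nat.not_lt_zero i)⟩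
      · push_neg at h0
        obtain ⟨i, hi⟩ := h0
        set s : ℤ := if 0 < w i then 1 else -1 with hs
        set w' : Fin d → ℤ := Function.update w i (w i - s) with hw'
        have hlt : (∑ j, (w' j).natAbs) < n := by
          rw [← hw]
          have e1 : (∑ j, (w' j).natAbs) =
              (w i - s).natAbs + ∑ j ∈ Finset.univ.erase i, (w j).natAbs := by
            rw [← Finset.add_sum_erase _ (fun j => (w' j).natAbs) (Finset.mem_univ i)]
            congr 1
            · rw [hw', Function.update_self]
            · exact Finset.sum_congr rfl fun j hj => by
                rw [hw', Function.update_of_ne (Finset.ne_of_mem_erase hj)]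
          have e2 : (∑ j, (w j).natAbs) =
              (w i).natAbs + ∑ j ∈ Finset.univ.erase i, (w j).natAbs :=
            (Finset.add_sum_erase _ (fun j => (w j).natAbs) (Finset.mem_univ i)).symm
          rw [e1, e2]
          have : (w i - s).natAbs < (w i).natAbs := by
            rw [hs]
            split <;> omega
          omega
        have hreach := ih _ hlt w' rfl
        have hmem' : x + zvec d w ∈ halfIntSet d :=
          halfIntSet_add_int hx (zvec_mem d w)
        have hdist : dist (x + zvec d w) (x + zvec d w') = 1 := by
          rw [dist_add_left, EuclideanSpace.dist_eq]
          have : ∀ j, dist (zvec d w j) (zvec d w' j) ^ 2 =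
              if j = i then 1 else 0 := by
            intro j
            by_cases hji : j = i
            · subst hji
              simp only [zvec, hw', Function.update_self, if_pos rfl]
              rw [Real.dist_eq]
              push_cast
              have : (w j : ℝ) - (w j - s) = s := by ring
              rw [this]
              rw [hs]
              split <;> norm_num
            · simp only [zvec, hw', Function.update_of_ne hji, if_neg hji]
              simp
          rw [Finset.sum_congr rfl fun j _ => this j]
          simp
        exact hreach.extend hmem' (le_of_eq hdist)
  exact key _ w rfl

/-- Along a `1`-chain in `halfIntSet`, the endpoints differ by an integer vector. -/
lemma reachable_diff_int {d : ℕ} (hd : 5 ≤ d) {x y : EuclideanSpace ℝ (Fin d)}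
    (h : Reachable d (halfIntSet d) 1 x y) : y - x ∈ IntLattice d := by
  obtain ⟨m, c, h0, hm, hmem, hstep⟩ := h
  have key : ∀ i ≤ m, c i - c 0 ∈ IntLattice d := by
    intro i
    induction i with
    | zero => intro _; simpa using intLattice_zero d
    | succ i ih =>
      intro hi
      have hi' : i ≤ m := Nat.le_of_succ_le hi
      have h1 : c (i + 1) - c i ∈ IntLattice d :=
        step_same_coset hd (hmem i hi') (hmem (i + 1) hi)
          (by rw [dist_comm]; exact hstep i hi)
      have : c (i + 1) - c 0 = (c (i + 1) - c i) + (c i - c 0) := by abel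
      rw [this]
      exact intLattice_add h1 (ih hi')
  rw [← hm, ← h0]
  exact key m le_rfl

/-- For `X = ℤ^d ∪ ((1/2,…,1/2) + ℤ^d)` with `d ≥ 5`: the minimal distance between
distinct points of `X` is `1`; for any `x ∈ X` the set of points of `X` that are
`1`-reachable from `x` is the translate of `ℤ^d` containing `x`; and in particular `X`
is not `1`-bonded. -/
theorem halfInt_lattice_not_one_bonded (d : ℕ) (hd : 5 ≤ d) :
    (∀ x ∈ halfIntSet d, ∀ y ∈ halfIntSet d, x ≠ y → 1 ≤ dist x y) ∧
    (∃ x ∈ halfIntSet d, ∃ y ∈ halfIntSet d, x ≠ y ∧ dist x y = 1) ∧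
    (∀ x ∈ halfIntSet d,
      {y | Reachable d (halfIntSet d) 1 x y} = {y | ∃ w ∈ IntLattice d, y = x + w}) ∧
    (∃ x ∈ halfIntSet d, ∃ y ∈ halfIntSet d, ¬ Reachable d (halfIntSet d) 1 x y) := by
  have hd0 : 0 < d := by omega
  have i0 : Fin d := ⟨0, hd0⟩
  have hhalf : halfVec d ∈ halfIntSet d :=
    Or.inr ⟨0, intLattice_zero d, by simp⟩
  have hzero : (0 : EuclideanSpace ℝ (Fin d)) ∈ halfIntSet d := Or.inl (intLattice_zero d)
  have part3 : ∀ x ∈ halfIntSet d,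
      {y | Reachable d (halfIntSet d) 1 x y} = {y | ∃ w ∈ IntLattice d, y = x + w} := by
    intro x hx
    ext y
    simp only [Set.mem_setOf_eq]
    constructor
    · intro h
      exact ⟨y - x, reachable_diff_int hd h, by abel⟩
    · rintro ⟨w, hw, rfl⟩
      have : ∀ i, ∃ n : ℤ, w i = n := hw
      choose z hz using this
      have : w = zvec d z := PiLp.ext fun i => by simp [zvec, hz i]
      rw [this]
      exact reachable_zvec x hx z
  refine ⟨?_, ?_, part3, ?_⟩
  · intro x hx y hy hxy
    rcases hx with hx | hx <;> rcases hy with hy | hy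
    · exact one_le_dist_lattice (intLattice_sub hx hy) hxy
    · rw [dist_comm] at *
      exact le_of_lt (by rw [dist_comm]; exact one_lt_dist_cross hd hx hy)
    · rw [dist_comm]
      exact le_of_lt (one_lt_dist_cross hd hy hx)
    · obtain ⟨wx, hwx, rfl⟩ := hx
      obtain ⟨wy, hwy, rfl⟩ := hy
      have : halfVec d + wx - (halfVec d + wy) = wx - wy := by abel
      exact one_le_dist_lattice (by rw [this]; exact intLattice_sub hwx hwy) hxy
  · refine ⟨0, hzero, zvec d (fun j => if j = i0 then 1 else 0),
      Or.inl (zvec_mem d _), ?_, ?_⟩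
    · intro h
      have := congrFun (congrArg WithLp.ofLp h.symm) i0
      simp [zvec] at this
    · have h2 : dist (0 : EuclideanSpace ℝ (Fin d))
          (zvec d (fun j => if j = i0 then 1 else 0)) ^ 2 = 1 := by
        rw [dist_sq_eq]
        have : ∀ j : Fin d, ((0 : EuclideanSpace ℝ (Fin d)) j -
            zvec d (fun j => if j = i0 then 1 else 0) j) ^ 2 =
            if j = i0 then 1 else 0 := by
          intro j
          by_cases hj : j = i0 <;> simp [zvec, hj]
        rw [Finset.sum_congr rfl fun j _ => this j]
        simp
      nlinarith [dist_nonneg (x := (0 : EuclideanSpace ℝ (Fin d)))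
        (y := zvec d (fun j => if j = i0 then 1 else 0))]
  · refine ⟨0, hzero, halfVec d, hhalf, ?_⟩
    intro h
    have hmem : halfVec d ∈ {y | ∃ w ∈ IntLattice d, y = (0 : EuclideanSpace ℝ (Fin d)) + w} := by
      rw [← part3 0 hzero]; exact h
    obtain ⟨w, hw, hweq⟩ := hmem
    obtain ⟨n, hn⟩ := hw i0
    have : halfVec d i0 = w i0 := by rw [hweq]; simp
    rw [hn] at this
    have : (1 : ℝ) / 2 = n := this
    have h2 : (1 : ℝ) = 2 * n := by linarith
    have : (1 : ℤ) = 2 * n := by exact_mod_cast h2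
    omega
end

section
/- Let X ⊆ ℝ^d be a Delone set with covering radius R, and let x ∈ X. Then the cluster C_x(2R) = X ∩ B(x, 2R) is full-dimensional: its affine hull is all of ℝ^d. -/
open scoped RealInnerProductSpace

lemma aux_finite_cluster (d : ℕ) (X : Set (EuclideanSpace ℝ (Fin d))) (r : ℝ) (hr : 0 < r)
    (hpack : ∀ x ∈ X, ∀ y ∈ X, x ≠ y → 2 * r ≤ dist x y)
    (x : EuclideanSpace ℝ (Fin d)) (c : ℝ) :
    (X ∩ Metric.closedBall x c).Finite := by
  have htb : TotallyBounded (Metric.closedBall x c) :=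
    (isCompact_closedBall x c).totallyBounded
  rw [Metric.totallyBounded_iff] at htb
  obtain ⟨t, ht, hcover⟩ := htb r hr
  have hsub : X ∩ Metric.closedBall x c ⊆ ⋃ y ∈ t, X ∩ Metric.ball y r := by
    rintro p ⟨hpX, hpb⟩
    have := hcover hpb
    simp only [Set.mem_iUnion] at this ⊢
    obtain ⟨y, hy, hpy⟩ := this
    exact ⟨y, hy, hpX, hpy⟩
  refine Set.Finite.subset (Set.Finite.biUnion ht fun y _ => ?_) hsub
  refine Set.Subsingleton.finite fun p hp q hq => ?_
  by_contra hne
  have h1 := hpack p hp.1 q hq.1 hne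
  have h2 : dist p y < r := hp.2
  have h3 : dist q y < r := hq.2
  have h4 : dist p q ≤ dist p y + dist y q := dist_triangle p y q
  rw [dist_comm y q] at h4
  linarith

/-- For a Delone set `X ⊆ ℝ^d` with covering radius `R` and `x ∈ X`, the cluster
`C_x(2R) = X ∩ B(x, 2R)` is full-dimensional: its affine hull is all of `ℝ^d`. -/
theorem affineSpan_cluster_two_covering_eq_top
    (d : ℕ) (X : Set (EuclideanSpace ℝ (Fin d))) (r R : ℝ)
    (hr : 0 < r) (hrR : r ≤ R)
    (hpack : ∀ x ∈ X, ∀ y ∈ X, x ≠ y → 2 * r ≤ dist x y)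
    (hcov : ∀ p : EuclideanSpace ℝ (Fin d), ∃ q ∈ X, dist q p ≤ R)
    (x : EuclideanSpace ℝ (Fin d)) (hx : x ∈ X) :
    affineSpan ℝ (X ∩ Metric.closedBall x (2 * R)) = ⊤ := by
  by_contra htop
  have hR : 0 < R := hr.trans_le hrR
  set C := X ∩ Metric.closedBall x (2 * R) with hC
  have hxC : x ∈ C := ⟨hx, by simp [Metric.mem_closedBall]; positivity⟩
  set s := affineSpan ℝ C with hs
  have hxs : x ∈ s := subset_affineSpan ℝ C hxC
  -- obtain a nonzero orthogonal vector
  have hdir : s.direction ≠ ⊤ := by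
    intro h
    exact htop ((AffineSubspace.direction_eq_top_iff_of_nonempty ⟨x, hxs⟩).mp h)
  have hbot : s.directionᗮ ≠ ⊥ := by
    intro h
    exact hdir (Submodule.orthogonal_eq_bot_iff.mp h)
  obtain ⟨v, hv, hv0⟩ := Submodule.exists_mem_ne_zero_of_ne_bot hbot
  set w : EuclideanSpace ℝ (Fin d) := ‖v‖⁻¹ • v with hw
  have hnv : (0:ℝ) < ‖v‖ := norm_pos_iff.mpr hv0
  have hwnorm : ‖w‖ = 1 := by
    rw [hw, norm_smul, norm_inv, norm_norm, inv_mul_cancel₀ (ne_of_gt hnv)]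
  have horth : ∀ y ∈ C, (inner ℝ (y - x) w : ℝ) = 0 := by
    intro y hy
    have hyd : y - x ∈ s.direction := by
      have := AffineSubspace.vsub_mem_direction (subset_affineSpan ℝ C hy) hxs
      simpa using this
    have h0 : (inner ℝ (y - x) v : ℝ) = 0 := (Submodule.mem_orthogonal _ v).mp hv (y - x) hyd
    rw [hw, real_inner_smul_right, h0, mul_zero]
  -- gap around 2R
  have hfin : (X ∩ Metric.closedBall x (3 * R)).Finite :=
    aux_finite_cluster d X r hr hpack x (3 * R)
  have hT : {y ∈ X ∩ Metric.closedBall x (3 * R) | 2 * R < dist y x}.Finite :=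
    hfin.subset (Set.sep_subset _ _)
  have hgap : ∃ g > 0, ∀ y ∈ X, dist y x ≤ 3 * R → 2 * R < dist y x → 2 * R + g ≤ dist y x := by
    rcases Set.eq_empty_or_nonempty {y ∈ X ∩ Metric.closedBall x (3 * R) | 2 * R < dist y x}
      with he | hne
    · refine ⟨R, hR, fun y hyX hy3 hy2 => absurd ?_ (Set.eq_empty_iff_forall_notMem.mp he y)⟩
      exact ⟨⟨hyX, Metric.mem_closedBall.mpr hy3⟩, hy2⟩
    · obtain ⟨m, hm, hmin⟩ := Set.exists_min_image _ (fun y => dist y x) hT hne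
      refine ⟨dist m x - 2 * R, by linarith [hm.2], fun y hyX hy3 hy2 => ?_⟩
      have := hmin y ⟨⟨hyX, Metric.mem_closedBall.mpr hy3⟩, hy2⟩
      linarith
  obtain ⟨g, hg, hgapp⟩ := hgap
  set ε : ℝ := min g R / 2 with hε
  have hε0 : 0 < ε := by positivity
  have hεg : ε < g := by
    have : min g R ≤ g := min_le_left _ _
    simp only [hε]; linarith
  have hεR : ε ≤ R := by
    have : min g R ≤ R := min_le_right _ _
    simp only [hε]; linarith
  set p : EuclideanSpace ℝ (Fin d) := x + (R + ε) • w with hp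
  obtain ⟨q, hqX, hqp⟩ := hcov p
  have hpx : dist p x = R + ε := by
    rw [hp, dist_eq_norm, add_sub_cancel_left, norm_smul, hwnorm, mul_one,
      Real.norm_eq_abs, abs_of_pos (by linarith)]
  have hqx : dist q x ≤ 2 * R + ε := by
    calc dist q x ≤ dist q p + dist p x := dist_triangle q p x
    _ ≤ R + (R + ε) := by linarith
    _ = 2 * R + ε := by ring
  by_cases hcase : dist q x ≤ 2 * R
  · -- q is in the cluster, hence orthogonal to w, hence far from p
    have hqC : q ∈ C := ⟨hqX, Metric.mem_closedBall.mpr hcase⟩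
    have hio : (inner ℝ (q - x) w : ℝ) = 0 := horth q hqC
    have hqp2 : dist q p ^ 2 = ‖q - x‖ ^ 2 + (R + ε) ^ 2 := by
      have : q - p = (q - x) - (R + ε) • w := by rw [hp]; abel
      rw [dist_eq_norm, this, norm_sub_sq_real, real_inner_smul_right, hio, mul_zero,
        norm_smul, hwnorm, mul_one, Real.norm_eq_abs, abs_of_pos (by linarith : (0:ℝ) < R + ε)]
      ring
    have h1 : (R + ε) ^ 2 ≤ dist q p ^ 2 := by nlinarith [sq_nonneg ‖q - x‖]
    nlinarith [dist_nonneg (x := q) (y := p)]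
  · -- q is outside the cluster: contradicts the gap
    push_neg at hcase
    have h3 : dist q x ≤ 3 * R := by linarith
    have := hgapp q hqX h3 hcase
    linarith
end
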